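/- Let ∑_{n=0}^∞ a_n be a series of real numbers with a_0 ≤ 0, such that a_n > 0 for infinitely many n and a_n ≤ 0 for infinitely many n. Suppose there exists a type R λ-permutation σ_0 with bounded block number C_0 such that ∑_{n=0}^∞ a_{σ_0(n)} = r_0, and suppose the series satisfies ST_N. Then for every r ∈ ℝ there exist C ∈ ℕ and i_2 ∈ ℕ such that for all i > i_2, S_{q_i} + S_{[N_{i+1}, N_{i+C−1}]} < r, where q_i is the largest element of the i-th positive block P_i and S_{q_i} = Σ_{n=0}^{q_i} a_n. -/

import Mathlib

open Filter Finset

noncomputable section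
open scoped Classical

/-- Partial sum of the series `∑ a n`: sum of the first `n` terms. -/
def partialSum (a : ℕ → ℝ) (n : ℕ) : ℝ := ∑ i ∈ Finset.range n, a i

/-- The series `∑ a n` converges to `L`. -/
def ConvergesTo (a : ℕ → ℝ) (L : ℝ) : Prop :=
  Filter.Tendsto (partialSum a) Filter.atTop (nhds L)

/-- The series `∑ a n` converges. -/
def Converges (a : ℕ → ℝ) : Prop := ∃ L : ℝ, ConvergesTo a L

/-- The series `∑ a n` is conditionally divergent: it diverges, but some
rearrangement of it converges. -/
def CondDivergent (a : ℕ → ℝ) : Prop :=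
  ¬ Converges a ∧ ∃ σ : Equiv.Perm ℕ, Converges (fun n => a (σ n))

/-- `σ` is a type R permutation of the series `∑ a n`: it preserves the relative
order of terms of the same sign. -/
def IsTypeR (a : ℕ → ℝ) (σ : Equiv.Perm ℕ) : Prop :=
  ∀ i j : ℕ, σ i < σ j →
    ((0 < a (σ i) ∧ 0 < a (σ j)) ∨ (a (σ i) ≤ 0 ∧ a (σ j) ≤ 0)) → i < j

/-- The number of maximal integer intervals whose union is the finite set `s`
(= the number of `x ∈ s` with `x + 1 ∉ s`). -/
def blockCount (s : Finset ℕ) : ℕ := (s.filter (fun x => x + 1 ∉ s)).card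

/-- `σ` has bounded block number `C`: at every stage `n`, the set
`σ '' {0, 1, …, n}` is a union of at most `C` maximal integer intervals. -/
def HasBBN (σ : Equiv.Perm ℕ) (C : ℕ) : Prop :=
  ∀ n : ℕ, blockCount ((Finset.range (n + 1)).image σ) ≤ C

/-- `σ` is a type R λ-permutation of the series `∑ a n`: a type R permutation
with bounded block number whose rearranged series converges. -/
def IsTypeRLambda (a : ℕ → ℝ) (σ : Equiv.Perm ℕ) : Prop :=
  IsTypeR a σ ∧ (∃ C : ℕ, HasBBN σ C) ∧ Converges (fun n => a (σ n))

/-- The set of sums attainable by type R λ-permutations of `∑ a n`. -/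
def ZR (a : ℕ → ℝ) : Set ℝ :=
  {r : ℝ | ∃ σ : Equiv.Perm ℕ, IsTypeRLambda a σ ∧ ConvergesTo (fun n => a (σ n)) r}

/-- The first element `p_i` of the `i`-th positive block `P_i` (blocks 1-indexed):
the `i`-th index `n` with `a n > 0` which starts a maximal interval of positive terms. -/
def posStartIdx (a : ℕ → ℝ) (i : ℕ) : ℕ :=
  Nat.nth (fun n => 0 < a n ∧ (n = 0 ∨ a (n - 1) ≤ 0)) (i - 1)

/-- The last element `q_i` of the `i`-th positive block `P_i` (blocks 1-indexed). -/
def posEndIdx (a : ℕ → ℝ) (i : ℕ) : ℕ :=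
  Nat.nth (fun n => 0 < a n ∧ a (n + 1) ≤ 0) (i - 1)

/-- The first element `n_i` of the `i`-th negative block `N_i` (blocks 1-indexed). -/
def negStartIdx (a : ℕ → ℝ) (i : ℕ) : ℕ :=
  Nat.nth (fun n => a n ≤ 0 ∧ (n = 0 ∨ 0 < a (n - 1))) (i - 1)

/-- The last element `m_i` of the `i`-th negative block `N_i` (blocks 1-indexed). -/
def negEndIdx (a : ℕ → ℝ) (i : ℕ) : ℕ :=
  Nat.nth (fun n => a n ≤ 0 ∧ 0 < a (n + 1)) (i - 1)

/-- `S_{[P_i, P_j]}`: the sum of the terms of `∑ a n` lying in the positive blocks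
`P_i ∪ ⋯ ∪ P_j` (interpreted as `0` when `j < i`). -/
def SP (a : ℕ → ℝ) (i j : ℕ) : ℝ :=
  if j < i then 0
  else ∑ n ∈ Finset.Icc (posStartIdx a i) (posEndIdx a j), if 0 < a n then a n else 0

/-- `S_{[N_i, N_j]}`: the sum of the terms of `∑ a n` lying in the negative blocks
`N_i ∪ ⋯ ∪ N_j` (interpreted as `0` when `j < i`). -/
def SN (a : ℕ → ℝ) (i j : ℕ) : ℝ :=
  if j < i then 0
  else ∑ n ∈ Finset.Icc (negStartIdx a i) (negEndIdx a j), if a n ≤ 0 then a n else 0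

/-- The substantial property on positive blocks. -/
def STP (a : ℕ → ℝ) : Prop :=
  ∃ k : ℕ, ∃ ε : ℝ, 0 < ε ∧ ∃ i0 : ℕ, ∀ i > i0, SP a i (i + k) ≥ ε

/-- The substantial property on negative blocks. -/
def STN (a : ℕ → ℝ) : Prop :=
  ∃ k : ℕ, ∃ ε : ℝ, 0 < ε ∧ ∃ i0 : ℕ, ∀ i > i0, SN a i (i + k) ≤ -ε

/-! ### Auxiliary machinery for Statement 9 -/

/-- Predicate: `n` is the last element of a positive block. -/
abbrev s9PE (a : ℕ → ℝ) (n : ℕ) : Prop := 0 < a n ∧ a (n + 1) ≤ 0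

/-- Predicate: `n` is the first element of a negative block. -/
abbrev s9NS (a : ℕ → ℝ) (n : ℕ) : Prop := a n ≤ 0 ∧ (n = 0 ∨ 0 < a (n - 1))

/-- Predicate: `n` is the last element of a negative block. -/
abbrev s9NE (a : ℕ → ℝ) (n : ℕ) : Prop := a n ≤ 0 ∧ 0 < a (n + 1)

lemma s9_exists_NE {a : ℕ → ℝ} {x y : ℕ} (hx : a x ≤ 0) (hy : 0 < a y) (hxy : x < y) :
    ∃ t, x ≤ t ∧ t < y ∧ a t ≤ 0 ∧ 0 < a (t + 1) := by
  set t := Nat.findGreatest (fun n => a n ≤ 0) (y - 1) with ht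
  have hw : x ≤ y - 1 := by omega
  have h1 : a t ≤ 0 := Nat.findGreatest_spec (P := fun n => a n ≤ 0) hw hx
  have h2 : x ≤ t := Nat.le_findGreatest hw hx
  have h3 : t ≤ y - 1 := Nat.findGreatest_le _
  refine ⟨t, h2, by omega, h1, ?_⟩
  rcases eq_or_lt_of_le (show t + 1 ≤ y by omega) with he | hl
  · rw [he]; exact hy
  · have h4 : ¬ a (t + 1) ≤ 0 :=
      Nat.findGreatest_is_greatest (P := fun n => a n ≤ 0) (n := y - 1) (k := t + 1)
        (by omega) (by omega)
    exact lt_of_not_ge h4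

lemma s9_exists_PE {a : ℕ → ℝ} {x y : ℕ} (hx : 0 < a x) (hy : a y ≤ 0) (hxy : x < y) :
    ∃ t, x ≤ t ∧ t < y ∧ 0 < a t ∧ a (t + 1) ≤ 0 := by
  set t := Nat.findGreatest (fun n => 0 < a n) (y - 1) with ht
  have hw : x ≤ y - 1 := by omega
  have h1 : 0 < a t := Nat.findGreatest_spec (P := fun n => 0 < a n) hw hx
  have h2 : x ≤ t := Nat.le_findGreatest hw hx
  have h3 : t ≤ y - 1 := Nat.findGreatest_le _
  refine ⟨t, h2, by omega, h1, ?_⟩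
  rcases eq_or_lt_of_le (show t + 1 ≤ y by omega) with he | hl
  · rw [he]; exact hy
  · have h4 : ¬ 0 < a (t + 1) :=
      Nat.findGreatest_is_greatest (P := fun n => 0 < a n) (n := y - 1) (k := t + 1)
        (by omega) (by omega)
    exact not_lt.mp h4

lemma s9_exists_NS {a : ℕ → ℝ} {x y : ℕ} (hx : 0 < a x) (hy : a y ≤ 0) (hxy : x < y) :
    ∃ t, x < t ∧ t ≤ y ∧ a t ≤ 0 ∧ 0 < a (t - 1) := by
  have hex : ∃ j, a (x + 1 + j) ≤ 0 :=
    ⟨y - x - 1, by rw [show x + 1 + (y - x - 1) = y by omega]; exact hy⟩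
  set j := Nat.find hex with hj
  have hle : j ≤ y - x - 1 :=
    Nat.find_min' hex (by rw [show x + 1 + (y - x - 1) = y by omega]; exact hy)
  refine ⟨x + 1 + j, by omega, by omega, Nat.find_spec hex, ?_⟩
  rcases Nat.eq_zero_or_pos j with h | h
  · rw [h]; simpa using hx
  · have h1 := Nat.find_min hex (show j - 1 < j by omega)
    rw [show x + 1 + j - 1 = x + 1 + (j - 1) by omega]
    exact lt_of_not_ge h1

lemma s9_PE_inf {a : ℕ → ℝ} (hP : {n : ℕ | 0 < a n}.Infinite)
    (hN : {n : ℕ | a n ≤ 0}.Infinite) : {n : ℕ | s9PE a n}.Infinite := by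
  apply Set.infinite_of_forall_exists_gt
  intro m
  obtain ⟨x, hx, hmx⟩ := hP.exists_gt m
  obtain ⟨y, hy, hxy⟩ := hN.exists_gt x
  obtain ⟨t, h1, _, h3, h4⟩ := s9_exists_PE hx hy hxy
  exact ⟨t, ⟨h3, h4⟩, by omega⟩

lemma s9_NE_inf {a : ℕ → ℝ} (hP : {n : ℕ | 0 < a n}.Infinite)
    (hN : {n : ℕ | a n ≤ 0}.Infinite) : {n : ℕ | s9NE a n}.Infinite := by
  apply Set.infinite_of_forall_exists_gt
  intro m
  obtain ⟨x, hx, hmx⟩ := hN.exists_gt m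
  obtain ⟨y, hy, hxy⟩ := hP.exists_gt x
  obtain ⟨t, h1, _, h3, h4⟩ := s9_exists_NE hx hy hxy
  exact ⟨t, ⟨h3, h4⟩, by omega⟩

lemma s9_NS_inf {a : ℕ → ℝ} (hP : {n : ℕ | 0 < a n}.Infinite)
    (hN : {n : ℕ | a n ≤ 0}.Infinite) : {n : ℕ | s9NS a n}.Infinite := by
  apply Set.infinite_of_forall_exists_gt
  intro m
  obtain ⟨t, ht, hmt⟩ := (s9_PE_inf hP hN).exists_gt m
  exact ⟨t + 1, ⟨ht.2, Or.inr (by simpa using ht.1)⟩, by omega⟩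

lemma s9_count_NE_le_NS (a : ℕ → ℝ) (h0 : a 0 ≤ 0) (n : ℕ) :
    Nat.count (s9NE a) n ≤ Nat.count (s9NS a) n := by
  rw [Nat.count_eq_card_filter_range, Nat.count_eq_card_filter_range]
  set g : ℕ → ℕ := fun m => Nat.findGreatest (s9NS a) m with hg
  have hNS0 : s9NS a 0 := ⟨h0, Or.inl rfl⟩
  have hkey : ∀ m1 m2, s9NE a m1 → s9NE a m2 → m1 < m2 → g m1 < g m2 := by
    intro m1 m2 h1 h2 hlt
    have hne : m1 + 1 < m2 := by
      rcases eq_or_lt_of_le (show m1 + 1 ≤ m2 by omega) with he | h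
      · exfalso; rw [← he] at h2; exact absurd h1.2 (not_lt.mpr h2.1)
      · exact h
    obtain ⟨t, ht1, ht2, ht3, ht4⟩ := s9_exists_NS h1.2 h2.1 hne
    have hts : s9NS a t := ⟨ht3, Or.inr ht4⟩
    have h5 : t ≤ g m2 := Nat.le_findGreatest ht2 hts
    have h6 : g m1 ≤ m1 := Nat.findGreatest_le m1
    omega
  apply Finset.card_le_card_of_injOn g
  · intro m hm
    simp only [Finset.mem_coe, Finset.coe_filter, Set.mem_setOf_eq, Finset.mem_filter, Finset.mem_range] at hm ⊢
    refine ⟨?_, Nat.findGreatest_spec (Nat.zero_le m) hNS0⟩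
    have h7 : g m ≤ m := Nat.findGreatest_le m
    omega
  · intro m1 h1 m2 h2 heq
    simp only [Finset.coe_filter, Set.mem_setOf_eq, Finset.mem_range] at h1 h2
    by_contra hne
    rcases lt_or_gt_of_ne hne with h | h
    · exact absurd heq (ne_of_lt (hkey _ _ h1.2 h2.2 h))
    · exact absurd heq.symm (ne_of_lt (hkey _ _ h2.2 h1.2 h))

lemma s9_count_PE_le_NE (a : ℕ → ℝ) (h0 : a 0 ≤ 0) (n : ℕ) :
    Nat.count (s9PE a) n ≤ Nat.count (s9NE a) n := by
  rw [Nat.count_eq_card_filter_range, Nat.count_eq_card_filter_range]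
  set g : ℕ → ℕ := fun m => Nat.findGreatest (s9NE a) (m - 1) with hg
  have hwit : ∀ m, s9PE a m → ∃ t, t ≤ m - 1 ∧ s9NE a t := by
    intro m hm
    have hm0 : 0 < m := by
      rcases Nat.eq_zero_or_pos m with rfl | h
      · exact absurd hm.1 (not_lt.mpr h0)
      · exact h
    obtain ⟨t, _, ht2, ht3, ht4⟩ := s9_exists_NE h0 hm.1 hm0
    exact ⟨t, by omega, ht3, ht4⟩
  have hkey : ∀ m1 m2, s9PE a m1 → s9PE a m2 → m1 < m2 → g m1 < g m2 := by
    intro m1 m2 h1 h2 hlt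
    have hne : m1 + 1 < m2 := by
      rcases eq_or_lt_of_le (show m1 + 1 ≤ m2 by omega) with he | h
      · exfalso; rw [← he] at h2; exact absurd h2.1 (not_lt.mpr h1.2)
      · exact h
    obtain ⟨t, ht1, ht2, ht3, ht4⟩ := s9_exists_NE h1.2 h2.1 hne
    have h5 : t ≤ g m2 := Nat.le_findGreatest (by omega) ⟨ht3, ht4⟩
    have h6 : g m1 ≤ m1 - 1 := Nat.findGreatest_le (m1 - 1)
    omega
  apply Finset.card_le_card_of_injOn g
  · intro m hm
    simp only [Finset.mem_coe, Finset.coe_filter, Set.mem_setOf_eq, Finset.mem_filter, Finset.mem_range] at hm ⊢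
    obtain ⟨t, ht1, ht2⟩ := hwit m hm.2
    refine ⟨?_, Nat.findGreatest_spec ht1 ht2⟩
    have h7 : g m ≤ m - 1 := Nat.findGreatest_le (m - 1)
    omega
  · intro m1 h1 m2 h2 heq
    simp only [Finset.coe_filter, Set.mem_setOf_eq, Finset.mem_range] at h1 h2
    by_contra hne
    rcases lt_or_gt_of_ne hne with h | h
    · exact absurd heq (ne_of_lt (hkey _ _ h1.2 h2.2 h))
    · exact absurd heq.symm (ne_of_lt (hkey _ _ h2.2 h1.2 h))

lemma s9_count_irrel {p : ℕ → Prop} (i1 i2 : DecidablePred p) (n : ℕ) :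
    @Nat.count p i1 n = @Nat.count p i2 n := by
  congr 1

lemma s9_nth_le_of_count_le (p q : ℕ → Prop) (hp : (setOf p).Infinite)
    (hq : (setOf q).Infinite) (h : ∀ n, Nat.count q n ≤ Nat.count p n) (j : ℕ) :
    Nat.nth p j ≤ Nat.nth q j := by
  have h1 : j < Nat.count q (Nat.nth q j + 1) := by
    rw [Nat.count_succ, Nat.count_nth_of_infinite hq,
      if_pos (Nat.nth_mem_of_infinite hq j)]
    omega
  have h2 : j < Nat.count p (Nat.nth q j + 1) := lt_of_lt_of_le h1 (h _)
  have h3 := Nat.nth_lt_of_lt_count h2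
  omega

lemma s9_nth_NS_succ (a : ℕ → ℝ) (h0 : a 0 ≤ 0) (hP : {n : ℕ | 0 < a n}.Infinite)
    (hN : {n : ℕ | a n ≤ 0}.Infinite) (j : ℕ) :
    Nat.nth (s9NS a) (j + 1) = Nat.nth (s9PE a) j + 1 := by
  have hPEinf := s9_PE_inf hP hN
  set q := Nat.nth (s9PE a) j with hq
  have hq' : s9PE a q := Nat.nth_mem_of_infinite hPEinf j
  have hNSq : s9NS a (q + 1) := ⟨hq'.2, Or.inr (by simpa using hq'.1)⟩
  have hcount : Nat.count (s9NS a) (q + 1) = j + 1 := by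
    rw [Nat.count_eq_card_filter_range]
    have hset : (Finset.range (q + 1)).filter (s9NS a) =
        insert 0 (((Finset.range q).filter (s9PE a)).image (· + 1)) := by
      ext n
      simp only [Finset.mem_filter, Finset.mem_range, Finset.mem_insert, Finset.mem_image]
      constructor
      · rintro ⟨hn, hns⟩
        rcases Nat.eq_zero_or_pos n with rfl | hpos
        · exact Or.inl rfl
        · right
          obtain ⟨m, rfl⟩ : ∃ m, n = m + 1 := ⟨n - 1, by omega⟩
          have hposm : 0 < a m := by
            rcases hns.2 with h | h
            · omega
            · simpa using h
          exact ⟨m, ⟨by omega, hposm, hns.1⟩, rfl⟩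
      · rintro (rfl | ⟨m, ⟨hm, hm1, hm2⟩, rfl⟩)
        · exact ⟨by omega, h0, Or.inl rfl⟩
        · exact ⟨by omega, hm2, Or.inr (by simpa using hm1)⟩
    rw [hset, Finset.card_insert_of_notMem (by simp),
      Finset.card_image_of_injective _ (fun x y h => by omega),
      ← Nat.count_eq_card_filter_range, Nat.count_nth_of_infinite hPEinf]
  have h2 := Nat.nth_count hNSq
  rw [hcount] at h2
  exact h2

lemma s9_nth_NS_le_NE (a : ℕ → ℝ) (h0 : a 0 ≤ 0) (hP : {n : ℕ | 0 < a n}.Infinite)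
    (hN : {n : ℕ | a n ≤ 0}.Infinite) (j : ℕ) :
    Nat.nth (s9NS a) j ≤ Nat.nth (s9NE a) j := by
  apply s9_nth_le_of_count_le _ _ (s9_NS_inf hP hN) (s9_NE_inf hP hN) _ j
  intro n
  exact le_trans (le_of_eq (s9_count_irrel _ _ n))
    (le_trans (s9_count_NE_le_NS a h0 n) (le_of_eq (s9_count_irrel _ _ n)))

lemma s9_nth_NE_le_PE (a : ℕ → ℝ) (h0 : a 0 ≤ 0) (hP : {n : ℕ | 0 < a n}.Infinite)
    (hN : {n : ℕ | a n ≤ 0}.Infinite) (j : ℕ) :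
    Nat.nth (s9NE a) j ≤ Nat.nth (s9PE a) j := by
  apply s9_nth_le_of_count_le _ _ (s9_NE_inf hP hN) (s9_PE_inf hP hN) _ j
  intro n
  exact le_trans (le_of_eq (s9_count_irrel _ _ n))
    (le_trans (s9_count_PE_le_NE a h0 n) (le_of_eq (s9_count_irrel _ _ n)))

lemma s9_nth_NE_lt_NS (a : ℕ → ℝ) (h0 : a 0 ≤ 0) (hP : {n : ℕ | 0 < a n}.Infinite)
    (hN : {n : ℕ | a n ≤ 0}.Infinite) (j : ℕ) :
    Nat.nth (s9NE a) j < Nat.nth (s9NS a) (j + 1) := by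
  have h1 := s9_nth_NS_succ a h0 hP hN j
  have h2 := s9_nth_NE_le_PE a h0 hP hN j
  omega

lemma s9_sum_le_subset (f : ℕ → ℝ) (hf : ∀ n, f n ≤ 0) {E I : Finset ℕ} (h : E ⊆ I) :
    ∑ n ∈ I, f n ≤ ∑ n ∈ E, f n := by
  have h4 := Finset.sum_sdiff (f := f) h
  have h5 : ∑ n ∈ I \ E, f n ≤ 0 := Finset.sum_nonpos fun n _ => hf n
  linarith

lemma s9_sum_Icc_superadd (f : ℕ → ℝ) (hf : ∀ n, f n ≤ 0) {a1 b1 a2 b2 : ℕ}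
    (h1 : a1 ≤ a2) (h2 : b1 < a2) (h3 : b1 ≤ b2) :
    ∑ n ∈ Finset.Icc a1 b2, f n ≤
      ∑ n ∈ Finset.Icc a1 b1, f n + ∑ n ∈ Finset.Icc a2 b2, f n := by
  have hsub : Finset.Icc a1 b1 ∪ Finset.Icc a2 b2 ⊆ Finset.Icc a1 b2 :=
    Finset.union_subset (Finset.Icc_subset_Icc le_rfl h3) (Finset.Icc_subset_Icc h1 le_rfl)
  have hdisj : Disjoint (Finset.Icc a1 b1) (Finset.Icc a2 b2) := by
    rw [Finset.disjoint_left]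
    intro x hx1 hx2
    rw [Finset.mem_Icc] at hx1 hx2
    omega
  have h4 := Finset.sum_sdiff (f := f) hsub
  have h5 : ∑ n ∈ Finset.Icc a1 b2 \ (Finset.Icc a1 b1 ∪ Finset.Icc a2 b2), f n ≤ 0 :=
    Finset.sum_nonpos fun n _ => hf n
  have h6 := Finset.sum_union (f := f) hdisj
  linarith

lemma s9_SN_nonpos (a : ℕ → ℝ) (i j : ℕ) : SN a i j ≤ 0 := by
  unfold SN
  split
  · exact le_rfl
  · exact Finset.sum_nonpos fun n _ => by split_ifs with h; exacts [h, le_rfl]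

lemma s9_SN_superadd (a : ℕ → ℝ) (h0 : a 0 ≤ 0) (hP : {n : ℕ | 0 < a n}.Infinite)
    (hN : {n : ℕ | a n ≤ 0}.Infinite) {α β γ : ℕ}
    (hα : 1 ≤ α) (hαβ : α ≤ β) (hβγ : β < γ) :
    SN a α γ ≤ SN a α β + SN a (β + 1) γ := by
  have hNSinf := s9_NS_inf hP hN
  have hNEinf := s9_NE_inf hP hN
  unfold SN negStartIdx negEndIdx
  rw [if_neg (by omega), if_neg (by omega), if_neg (by omega)]
  rw [show β + 1 - 1 = β from by omega]
  apply s9_sum_Icc_superadd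
  · intro n; split_ifs with h; exacts [h, le_rfl]
  · exact Nat.nth_monotone hNSinf (by omega)
  · have h3 := s9_nth_NE_lt_NS a h0 hP hN (β - 1)
    rw [show β - 1 + 1 = β from by omega] at h3
    exact h3
  · exact Nat.nth_monotone hNEinf (by omega)

lemma s9_SN_chunks (a : ℕ → ℝ) (h0 : a 0 ≤ 0) (hP : {n : ℕ | 0 < a n}.Infinite)
    (hN : {n : ℕ | a n ≤ 0}.Infinite) {k : ℕ} {ε : ℝ} {i0 : ℕ}
    (hst : ∀ i > i0, SN a i (i + k) ≤ -ε) :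
    ∀ (L j : ℕ), i0 < j → SN a j (j + (L * (k + 1) + k)) ≤ -((L + 1 : ℕ) : ℝ) * ε := by
  intro L
  induction L with
  | zero =>
    intro j hj
    have h1 := hst j hj
    rw [show 0 * (k + 1) + k = k from by omega]
    push_cast
    linarith
  | succ L ih =>
    intro j hj
    have hpos : 0 < (L + 1) * (k + 1) := Nat.mul_pos (by omega) (by omega)
    have hsa := s9_SN_superadd a h0 hP hN (α := j) (β := j + k)
      (γ := j + ((L + 1) * (k + 1) + k)) (by omega) (by omega) (by omega)
    have h2 := ih (j + k + 1) (by omega)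
    rw [show (j + k + 1) + (L * (k + 1) + k) = j + ((L + 1) * (k + 1) + k) from by ring] at h2
    have h1 := hst j hj
    have : (((L + 1 + 1 : ℕ)) : ℝ) * ε = ((L + 1 : ℕ) : ℝ) * ε + ε := by push_cast; ring
    linarith

lemma s9_C₀_pos (σ₀ : Equiv.Perm ℕ) (C₀ : ℕ) (hB : HasBBN σ₀ C₀) : 1 ≤ C₀ := by
  have h1 := hB 0
  unfold blockCount at h1
  rw [Finset.range_one, Finset.image_singleton, Finset.filter_singleton,
    if_pos (by simp)] at h1
  simpa using h1

lemma s9_core (a : ℕ → ℝ) (h0 : a 0 ≤ 0)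
    (hP : {n : ℕ | 0 < a n}.Infinite) (hN : {n : ℕ | a n ≤ 0}.Infinite)
    (σ₀ : Equiv.Perm ℕ) (C₀ : ℕ) (M : ℝ)
    (hR : IsTypeR a σ₀) (hB : HasBBN σ₀ C₀)
    (hM : ∀ n, ∑ j ∈ Finset.range (n + 1), a (σ₀ j) ≤ M)
    (i : ℕ) (hi : 1 ≤ i) :
    partialSum a (posEndIdx a i + 1) ≤ M - SN a (i + 1) (i + C₀) := by
  have hC₀ : 1 ≤ C₀ := s9_C₀_pos σ₀ C₀ hB
  have hPEinf := s9_PE_inf hP hN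
  have hNEinf := s9_NE_inf hP hN
  set q := posEndIdx a i with hqdef
  have hq : s9PE a q := Nat.nth_mem_of_infinite hPEinf _
  have hmono_pos : ∀ x y : ℕ, 0 < a x → 0 < a y → x < y → σ₀.symm x < σ₀.symm y := by
    intro x y hx hy hxy
    apply hR
    · rw [Equiv.apply_symm_apply, Equiv.apply_symm_apply]; exact hxy
    · rw [Equiv.apply_symm_apply, Equiv.apply_symm_apply]; exact Or.inl ⟨hx, hy⟩
  have hmono_neg : ∀ x y : ℕ, a x ≤ 0 → a y ≤ 0 → x < y → σ₀.symm x < σ₀.symm y := by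
    intro x y hx hy hxy
    apply hR
    · rw [Equiv.apply_symm_apply, Equiv.apply_symm_apply]; exact hxy
    · rw [Equiv.apply_symm_apply, Equiv.apply_symm_apply]; exact Or.inr ⟨hx, hy⟩
  have hmemA : ∀ (n x : ℕ), x ∈ (Finset.range (n + 1)).image σ₀ ↔ σ₀.symm x ≤ n := by
    intro n x
    simp only [Finset.mem_image, Finset.mem_range]
    constructor
    · rintro ⟨j, hj, rfl⟩; rw [Equiv.symm_apply_apply]; omega
    · intro h; exact ⟨σ₀.symm x, by omega, σ₀.apply_symm_apply x⟩
  have hgoal : partialSum a (q + 1) = ∑ x ∈ Finset.range (q + 1), a x := rfl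
  by_cases hcase : ∀ m, m < q → a m ≤ 0 → σ₀.symm m ≤ σ₀.symm q
  · -- Case 1: every nonpositive index below `q` appears no later than `q`.
    set nst := σ₀.symm q with hnst
    set A := (Finset.range (nst + 1)).image σ₀ with hA
    have hqA : q ∈ A := (hmemA nst q).mpr le_rfl
    have hsub : Finset.range (q + 1) ⊆ A := by
      intro t ht
      rw [Finset.mem_range] at ht
      rw [hA, hmemA]
      by_cases hat : 0 < a t
      · rcases eq_or_lt_of_le (show t ≤ q by omega) with rfl | hlt
        · exact le_rfl
        · exact (hmono_pos t q hat hq.1 hlt).le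
      · push_neg at hat
        have htq : t < q := by
          rcases eq_or_lt_of_le (show t ≤ q by omega) with rfl | h
          · exact absurd hq.1 (not_lt.mpr hat)
          · exact h
        exact hcase t htq hat
    have hposout : ∀ x ∈ A, q < x → a x ≤ 0 := by
      intro x hx hqx
      by_contra hpos
      push_neg at hpos
      have h1 := hmono_pos q x hq.1 hpos hqx
      rw [hA, hmemA] at hx
      omega
    have hdc : ∀ x y : ℕ, x ∈ A → a x ≤ 0 → a y ≤ 0 → y ≤ x → y ∈ A := by
      intro x y hx hax hay hyx
      rcases eq_or_lt_of_le hyx with rfl | h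
      · exact hx
      · rw [hA, hmemA] at hx ⊢
        have := hmono_neg y x hay hax h
        omega
    have hns : Nat.nth (s9NS a) i = q + 1 := by
      have h1 := s9_nth_NS_succ a h0 hP hN (i - 1)
      rw [show i - 1 + 1 = i from by omega] at h1
      rw [h1, hqdef]
      rfl
    have he1' : negEndIdx a (i + C₀) = Nat.nth (s9NE a) (i + C₀ - 1) := rfl
    have hEbound : ∀ x ∈ A, q < x → x ≤ negEndIdx a (i + C₀) := by
      intro x hxA hqx
      by_contra hxe
      push_neg at hxe
      rw [he1'] at hxe
      have hax : a x ≤ 0 := hposout x hxA hqx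
      have hmle : ∀ t, t < C₀ → Nat.nth (s9NE a) (i + t) ≤ Nat.nth (s9NE a) (i + C₀ - 1) := by
        intro t ht
        exact Nat.nth_monotone hNEinf (by omega)
      have hmgtq : ∀ t, q < Nat.nth (s9NE a) (i + t) := by
        intro t
        have h1 : Nat.nth (s9NS a) i ≤ Nat.nth (s9NE a) i := s9_nth_NS_le_NE a h0 hP hN i
        have h2 : Nat.nth (s9NE a) i ≤ Nat.nth (s9NE a) (i + t) :=
          Nat.nth_monotone hNEinf (by omega)
        omega
      have hmA : ∀ t, t < C₀ → Nat.nth (s9NE a) (i + t) ∈ A := by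
        intro t ht
        exact hdc x _ hxA hax (Nat.nth_mem_of_infinite hNEinf (i + t)).1
          (by have := hmle t ht; omega)
      have hm1A : ∀ t, t < C₀ → Nat.nth (s9NE a) (i + t) + 1 ∉ A := by
        intro t ht hmem
        have h1 := hposout _ hmem (by have := hmgtq t; omega)
        have h2 := (Nat.nth_mem_of_infinite hNEinf (i + t)).2
        linarith
      have hAne : A.Nonempty := ⟨q, hqA⟩
      have hwA : A.max' hAne ∈ A := A.max'_mem hAne
      have hw1 : A.max' hAne + 1 ∉ A := fun h => by have := A.le_max' _ h; omega
      have hwgt : Nat.nth (s9NE a) (i + C₀ - 1) < A.max' hAne :=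
        lt_of_lt_of_le hxe (A.le_max' x hxA)
      have hinj : Function.Injective (fun t => Nat.nth (s9NE a) (i + t)) := by
        intro t1 t2 h
        have := Nat.nth_injective hNEinf h
        omega
      have hnotmem : A.max' hAne ∉ (Finset.range C₀).image (fun t => Nat.nth (s9NE a) (i + t)) := by
        intro hmem
        obtain ⟨t, ht, heq⟩ := Finset.mem_image.mp hmem
        rw [Finset.mem_range] at ht
        have := hmle t ht
        omega
      have hsub2 : insert (A.max' hAne) ((Finset.range C₀).image (fun t => Nat.nth (s9NE a) (i + t)))
          ⊆ A.filter (fun y => y + 1 ∉ A) := by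
        intro y hy
        rcases Finset.mem_insert.mp hy with rfl | hy2
        · exact Finset.mem_filter.mpr ⟨hwA, hw1⟩
        · obtain ⟨t, ht, rfl⟩ := Finset.mem_image.mp hy2
          rw [Finset.mem_range] at ht
          exact Finset.mem_filter.mpr ⟨hmA t ht, hm1A t ht⟩
      have hcard2 : (insert (A.max' hAne)
          ((Finset.range C₀).image (fun t => Nat.nth (s9NE a) (i + t)))).card = C₀ + 1 := by
        rw [Finset.card_insert_of_notMem hnotmem,
          Finset.card_image_of_injective _ hinj, Finset.card_range]
      have hcard : C₀ + 1 ≤ (A.filter (fun y => y + 1 ∉ A)).card := by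
        calc C₀ + 1 = _ := hcard2.symm
          _ ≤ _ := Finset.card_le_card hsub2
      have hbc := hB nst
      unfold blockCount at hbc
      rw [← hA] at hbc
      omega
    have hsplit := Finset.sum_sdiff (f := a) hsub
    have hAle : ∑ x ∈ A, a x ≤ M := by
      rw [hA, Finset.sum_image (fun x _ y _ h => σ₀.injective h)]
      exact hM nst
    have hSNle : SN a (i + 1) (i + C₀) ≤ ∑ x ∈ A \ Finset.range (q + 1), a x := by
      unfold SN
      rw [if_neg (by omega)]
      have hstart : negStartIdx a (i + 1) = q + 1 := by
        unfold negStartIdx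
        rw [show i + 1 - 1 = i from by omega]
        exact hns
      rw [hstart]
      have hesub : A \ Finset.range (q + 1) ⊆ Finset.Icc (q + 1) (negEndIdx a (i + C₀)) := by
        intro x hx
        rw [Finset.mem_sdiff, Finset.mem_range] at hx
        rw [Finset.mem_Icc]
        exact ⟨by omega, hEbound x hx.1 (by omega)⟩
      calc ∑ n ∈ Finset.Icc (q + 1) (negEndIdx a (i + C₀)), (if a n ≤ 0 then a n else 0)
          ≤ ∑ n ∈ A \ Finset.range (q + 1), (if a n ≤ 0 then a n else 0) :=
            s9_sum_le_subset _ (fun n => by split_ifs with h; exacts [h, le_rfl]) hesub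
        _ = ∑ n ∈ A \ Finset.range (q + 1), a n := by
            apply Finset.sum_congr rfl
            intro n hn
            rw [Finset.mem_sdiff, Finset.mem_range] at hn
            rw [if_pos (hposout n hn.1 (by omega))]
    rw [hgoal]
    linarith
  · -- Case 2: some nonpositive index below `q` appears after `q`.
    push_neg at hcase
    obtain ⟨m, hmq, hm, hmgt⟩ := hcase
    obtain ⟨m0, hm0q, hm0neg, hmax⟩ :
        ∃ m0, m0 < q ∧ a m0 ≤ 0 ∧ ∀ t, t < q → a t ≤ 0 → t ≤ m0 := by
      refine ⟨Nat.findGreatest (fun t => a t ≤ 0) (q - 1), ?_, ?_, ?_⟩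
      · have := Nat.findGreatest_le (P := fun t => a t ≤ 0) (q - 1); omega
      · exact Nat.findGreatest_spec (P := fun t => a t ≤ 0) (show m ≤ q - 1 by omega) hm
      · intro t h1 h2
        exact Nat.le_findGreatest (by omega) h2
    have hkey : σ₀.symm q < σ₀.symm m0 := by
      have h1 : m ≤ m0 := hmax m hmq hm
      rcases eq_or_lt_of_le h1 with rfl | h2
      · exact hmgt
      · exact hmgt.trans (hmono_neg m m0 hm hm0neg h2)
    have hsub : Finset.range (q + 1) ⊆ (Finset.range (σ₀.symm m0 + 1)).image σ₀ := by
      intro t ht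
      rw [Finset.mem_range] at ht
      rw [hmemA]
      by_cases hat : 0 < a t
      · rcases eq_or_lt_of_le (show t ≤ q by omega) with rfl | hlt
        · omega
        · have := hmono_pos t q hat hq.1 hlt; omega
      · push_neg at hat
        have htq : t < q := by
          rcases eq_or_lt_of_le (show t ≤ q by omega) with rfl | h
          · exact absurd hq.1 (not_lt.mpr hat)
          · exact h
        have h1 : t ≤ m0 := hmax t htq hat
        rcases eq_or_lt_of_le h1 with rfl | h2
        · omega
        · have := hmono_neg t m0 hat hm0neg h2; omega
    have hpos2 : ∀ x ∈ (Finset.range (σ₀.symm m0 + 1)).image σ₀, q < x → 0 < a x := by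
      intro x hx hqx
      by_contra hnp
      push_neg at hnp
      have h1 := hmono_neg m0 x hm0neg hnp (by omega)
      rw [hmemA] at hx
      omega
    have hsplit := Finset.sum_sdiff (f := a) hsub
    have hA_le : ∑ x ∈ (Finset.range (σ₀.symm m0 + 1)).image σ₀, a x ≤ M := by
      rw [Finset.sum_image (fun x _ y _ h => σ₀.injective h)]
      exact hM _
    have hpos3 : 0 ≤ ∑ x ∈ (Finset.range (σ₀.symm m0 + 1)).image σ₀ \ Finset.range (q + 1), a x := by
      apply Finset.sum_nonneg
      intro x hx
      rw [Finset.mem_sdiff, Finset.mem_range] at hx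
      exact (hpos2 x hx.1 (by omega)).le
    have hSN0 : SN a (i + 1) (i + C₀) ≤ 0 := s9_SN_nonpos a (i + 1) (i + C₀)
    rw [hgoal]
    linarith

/-- If the series (with `a 0 ≤ 0`, infinitely many positive and
nonpositive terms) admits a type R λ-permutation `σ₀` with bounded block number
`C₀` rearranging it to `r₀`, and satisfies `ST_N`, then for every `r` there are
`C, i₂` with `S_{q_i} + S_{[N_{i+1},N_{i+C−1}]} < r` for all `i > i₂`, where
`q_i` is the largest element of the positive block `P_i`. -/
theorem statement9 (a : ℕ → ℝ) (h0 : a 0 ≤ 0)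
    (hP : {n : ℕ | 0 < a n}.Infinite) (hN : {n : ℕ | a n ≤ 0}.Infinite)
    (σ₀ : Equiv.Perm ℕ) (C₀ : ℕ) (r₀ : ℝ)
    (hR : IsTypeR a σ₀) (hB : HasBBN σ₀ C₀)
    (hr₀ : ConvergesTo (fun n => a (σ₀ n)) r₀)
    (hstn : STN a) :
    ∀ r : ℝ, ∃ C : ℕ, ∃ i₂ : ℕ, ∀ i > i₂,
      partialSum a (posEndIdx a i + 1) + SN a (i + 1) (i + C - 1) < r := by
  intro r
  obtain ⟨k, ε, hε, i0, hst⟩ := hstn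
  obtain ⟨M, hM⟩ : ∃ M : ℝ, ∀ n, ∑ j ∈ Finset.range (n + 1), a (σ₀ j) ≤ M := by
    obtain ⟨M, hM⟩ := Filter.Tendsto.bddAbove_range hr₀
    exact ⟨M, fun n => hM (Set.mem_range_self (n + 1))⟩
  obtain ⟨L, hL⟩ := exists_nat_gt ((M - r) / ε)
  refine ⟨C₀ + (L * (k + 1) + k) + 2, i0 + 1, fun i hi => ?_⟩
  have hC₀ : 1 ≤ C₀ := s9_C₀_pos σ₀ C₀ hB
  have hcore := s9_core a h0 hP hN σ₀ C₀ M hR hB hM i (by omega)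
  have hchunk := s9_SN_chunks a h0 hP hN hst L (i + C₀ + 1) (by omega)
  have hsuper := s9_SN_superadd a h0 hP hN (α := i + 1) (β := i + C₀)
    (γ := (i + C₀ + 1) + (L * (k + 1) + k)) (by omega) (by omega) (by omega)
  rw [show i + (C₀ + (L * (k + 1) + k) + 2) - 1 = (i + C₀ + 1) + (L * (k + 1) + k) from by
    generalize L * (k + 1) + k = D; omega]
  have hL' : M - r < ((L : ℝ) + 1) * ε := by
    rw [div_lt_iff₀ hε] at hL
    have h2 : ((L : ℝ) + 1) * ε = (L : ℝ) * ε + ε := by ring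
    linarith
  push_cast at hchunk
  linarith
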